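/- Let f_c ∈ G be the indicator function of corollas (the leaf together with, for each n ≥ 1, the tree whose root has n+1 children, all leaves), and let g_c ∈ G be defined by g_c(t) = (−1)^{i(t)}, where i(t) is the number of internal nodes of t. Then f_c∘g_c = e; that is, the alternating sum of all Schröder trees is the compositional inverse of the series of corollas in the group of the Schröder operad. -/

import Mathlib

inductive PTree : Type where
  | node : List PTree → PTree

mutual
  def leavesT : PTree → ℕ
    | .node [] => 1
    | .node (t :: ts) => leavesT t + leavesL ts
  def leavesL : List PTree → ℕ
    | [] => 0
    | t :: ts => leavesT t + leavesL ts
end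

inductive Reduced : PTree → Prop where
  | leaf : Reduced (.node [])
  | node : ∀ ts : List PTree, 2 ≤ ts.length → (∀ t ∈ ts, Reduced t) → Reduced (.node ts)

mutual
  /-- Replace the leaves of a tree, from left to right, by the trees of a list;
  returns the resulting tree together with the unused trees of the list. -/
  def graftT : PTree → List PTree → PTree × List PTree
    | .node [], l => (l.headD (.node []), l.tail)
    | .node (c :: cs), l =>
        let p := graftL (c :: cs) l
        (.node p.1, p.2)
  def graftL : List PTree → List PTree → List PTree × List PTree
    | [], l => ([], l)
    | c :: cs, l =>
        let p := graftT c l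
        let q := graftL cs p.2
        (p.1 :: q.1, q.2)
end

/-- Schröder trees. -/
def SchT : Type := {t : PTree // Reduced t}

def leafST : SchT := ⟨.node [], Reduced.leaf⟩

/-- Decompositions `t = t₀ ∘ (t₁, …, t_n)` of a Schröder tree, where `t₀` has `n`
leaves. -/
def Decomps (t : SchT) : Set (SchT × List SchT) :=
  {p | (p.2.map Subtype.val).length = leavesT p.1.val ∧
    (graftT p.1.val (p.2.map Subtype.val)).1 = t.val}

/-- The composition product of the group of the Schröder operad:
`(f∘g)(t) = Σ f(t₀)·g(t₁)⋯g(t_n)` over all decompositions `t = t₀∘(t₁,…,t_n)`. -/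
noncomputable def compG (f g : SchT → ℚ) : SchT → ℚ :=
  fun t => ∑ᶠ p ∈ Decomps t, f p.1 * (p.2.map g).prod

/-- `(f⊣g)(t) = Σ f(t₀)·g(t₁)⋯g(t_{n−1})` over decompositions whose last entry is
the leaf. -/
noncomputable def ldash (f g : SchT → ℚ) : SchT → ℚ :=
  fun t => ∑ᶠ p ∈ {p | p ∈ Decomps t ∧ p.2.getLast? = some leafST},
    f p.1 * (p.2.dropLast.map g).prod

/-- `(f⊢g)(t) = Σ f(t₀)·g(t_n)` over decompositions whose entries `t₁,…,t_{n−1}`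
are all leaves. -/
noncomputable def rdash (f g : SchT → ℚ) : SchT → ℚ :=
  fun t => ∑ᶠ p ∈ {p | p ∈ Decomps t ∧ ∀ s ∈ p.2.dropLast, s = leafST},
    f p.1 * g (p.2.getLastD leafST)

/-- The identity element: the indicator function of the leaf. -/
def eG : SchT → ℚ := fun t =>
  match t.val with
  | .node [] => 1
  | _ => 0

mutual
  def inodesT : PTree → ℕ
    | .node [] => 0
    | .node (t :: ts) => 1 + inodesT t + inodesL ts
  def inodesL : List PTree → ℕ
    | [] => 0
    | t :: ts => inodesT t + inodesL ts
end

/-- A corolla: all child subtrees of the root are leaves (the leaf itself is the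
corolla with `ts = []`). -/
def IsCorolla (t : PTree) : Prop :=
  ∃ ts : List PTree, t = .node ts ∧ ∀ s ∈ ts, s = PTree.node []

open Classical in
/-- The series of corollas. -/
noncomputable def fc : SchT → ℚ := fun t => if IsCorolla t.val then 1 else 0

/-- The alternating sum of all Schröder trees: `g_c(t) = (−1)^{i(t)}`. -/
noncomputable def gc : SchT → ℚ := fun t => (-1 : ℚ) ^ (inodesT t.val)

-- aux lemmas
lemma leavesL_replicate (n : ℕ) : leavesL (List.replicate n (PTree.node [])) = n := by
  induction n with
  | zero => rfl
  | succ n ih => simp [List.replicate_succ, leavesL, leavesT, ih]; omega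

lemma leavesT_corolla (n : ℕ) (hn : 1 ≤ n) :
    leavesT (PTree.node (List.replicate n (PTree.node []))) = n := by
  cases n with
  | zero => omega
  | succ m => simp [List.replicate_succ, leavesT, leavesL_replicate]; omega

lemma graftL_replicate (n : ℕ) (l : List PTree) (hl : l.length = n) :
    graftL (List.replicate n (PTree.node [])) l = (l, []) := by
  induction n generalizing l with
  | zero => simp at hl; subst hl; simp [graftL]
  | succ n ih =>
    cases l with
    | nil => simp at hl
    | cons x xs =>
      simp at hl
      simp [List.replicate_succ, graftL, graftT, ih xs hl]

lemma graftT_corolla (n : ℕ) (hn : 1 ≤ n) (l : List PTree) (hl : l.length = n) :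
    graftT (PTree.node (List.replicate n (PTree.node []))) l = (PTree.node l, []) := by
  cases n with
  | zero => omega
  | succ m =>
    rw [List.replicate_succ, graftT]
    rw [← List.replicate_succ, graftL_replicate _ _ hl]

lemma inodesL_cons (u : PTree) (us : List PTree) :
    inodesL (u :: us) = inodesT u + inodesL us := rfl

lemma map_val_pmap (us : List PTree) (h : ∀ s ∈ us, Reduced s) :
    (List.pmap Subtype.mk us h).map Subtype.val = us := by
  induction us with
  | nil => rfl
  | cons u us ih => simp [List.pmap, ih]

lemma prod_gc_pmap (us : List PTree) (h : ∀ s ∈ us, Reduced s) :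
    ((List.pmap Subtype.mk us h).map gc).prod = (-1 : ℚ) ^ (inodesL us) := by
  induction us with
  | nil => simp [inodesL]; rfl
  | cons u us ih =>
    simp [List.pmap, gc, inodesL_cons, pow_add, ih]
    rw [← ih (fun s hs => h s (List.mem_cons_of_mem _ hs))]
    rfl

lemma gc_ne_zero (t : SchT) : gc t ≠ 0 := by
  simp [gc]

lemma prod_gc_ne_zero (l : List SchT) : (l.map gc).prod ≠ 0 := by
  apply List.prod_ne_zero
  intro hx
  simp at hx
  obtain ⟨s, _, h⟩ := hx
  exact gc_ne_zero s h
lemma decomps_leaf (t : SchT) (l : List SchT) :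
    (leafST, l) ∈ Decomps t ↔ l = [t] := by
  constructor
  · rintro ⟨h1, h2⟩
    have h1' : l.length = 1 := by simp [leafST, leavesT] at h1; exact (List.length_map ..).symm.trans h1
    obtain ⟨s, rfl⟩ := List.length_eq_one_iff.mp h1'
    simp only [leafST, List.map_cons, List.map_nil, graftT] at h2
    simp at h2
    rw [Subtype.ext h2]
  · rintro rfl
    exact ⟨by simp [leafST, leavesT]; rfl, by simp [leafST, graftT]; rfl⟩

lemma decomps_corolla (n : ℕ) (hn : 1 ≤ n) (p1 : SchT)
    (hp1 : p1.val = PTree.node (List.replicate n (PTree.node []))) (t : SchT) (l : List SchT) :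
    (p1, l) ∈ Decomps t ↔ l.length = n ∧ t.val = PTree.node (l.map Subtype.val) := by
  constructor
  · rintro ⟨h1, h2⟩
    rw [hp1, leavesT_corolla n hn] at h1
    simp at h1
    rw [hp1, graftT_corolla n hn _ (by simp [h1])] at h2
    exact ⟨(List.length_map ..).symm.trans h1, h2.symm⟩
  · rintro ⟨h1, h2⟩
    refine ⟨by simp [hp1, leavesT_corolla n hn, h1]; exact (List.length_map ..).trans h1, ?_⟩
    rw [hp1, graftT_corolla n hn _ (by simp [h1]; exact (List.length_map ..).trans h1), h2]

lemma corolla_cases (p : SchT) (h : IsCorolla p.val) :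
    p = leafST ∨ ∃ n, 2 ≤ n ∧ p.val = PTree.node (List.replicate n (PTree.node [])) := by
  obtain ⟨cs, hcs, hall⟩ := h
  have hr : Reduced (PTree.node cs) := hcs ▸ p.2
  cases hr with
  | leaf => left; exact Subtype.ext (by simp [hcs, leafST])
  | node _ h2 _ =>
    right
    refine ⟨cs.length, h2, ?_⟩
    rw [hcs]
    congr 1
    exact (List.eq_replicate_length.mpr hall)

lemma inodesT_node (u : PTree) (us : List PTree) :
    inodesT (PTree.node (u :: us)) = 1 + inodesL (u :: us) := by
  simp [inodesT, inodesL_cons]; omega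

lemma fc_leaf : fc leafST = 1 := by
  simp [fc, leafST, IsCorolla]

lemma fc_corolla (p : SchT) (n : ℕ)
    (hp : p.val = PTree.node (List.replicate n (PTree.node []))) : fc p = 1 := by
  simp only [fc]
  rw [if_pos]
  exact ⟨List.replicate n (PTree.node []), hp, fun s hs => List.eq_of_mem_replicate hs⟩
/-- `f_c ∘ g_c = e`: the alternating sum of all Schröder trees is
the compositional inverse of the series of corollas in the group of the
Schröder operad. -/
theorem stmt12 : compG fc gc = eG := by
  classical
  funext t
  unfold compG
  obtain ⟨tv, htred⟩ := t
  have hsupp : ∀ p : SchT × List SchT,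
      fc p.1 * (p.2.map gc).prod ≠ 0 → IsCorolla p.1.val := by
    intro p hp
    by_contra hc
    simp [fc, hc] at hp
  cases htred with
  | leaf =>
    have key : ∀ p ∈ Function.support (fun p : SchT × List SchT =>
        fc p.1 * (p.2.map gc).prod),
        p ∈ Decomps ⟨PTree.node [], Reduced.leaf⟩ ↔
        p ∈ ({(leafST, [leafST])} : Set (SchT × List SchT)) := by
      intro p hp
      obtain ⟨p1, p2⟩ := p
      have hcor := hsupp _ hp
      constructor
      · intro hd
        rcases corolla_cases p1 hcor with rfl | ⟨m, hm2, hp1⟩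
        · have := (decomps_leaf _ p2).mp hd
          simp [this, Set.mem_singleton_iff]
          rfl
        · obtain ⟨hlen, heq⟩ :=
            (decomps_corolla m (by omega) p1 hp1 _ p2).mp hd
          have heq' : PTree.node [] = PTree.node (p2.map Subtype.val) := heq
          injection heq' with h3
          have hp2 : p2 = [] := by
            cases p2 with
            | nil => rfl
            | cons x xs => exact absurd h3.symm (List.cons_ne_nil _ _)
          subst hp2
          simp at hlen
          omega
      · intro hmem
        simp at hmem
        obtain ⟨rfl, rfl⟩ := Prod.mk.injEq .. ▸ hmem
        exact (decomps_leaf _ _).mpr rfl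
    rw [finsum_mem_inter_support_eq' _ _ _ key, finsum_mem_singleton]
    show fc leafST * (List.map gc [leafST]).prod = eG leafST
    rw [fc_leaf]
    show 1 * (gc leafST * 1) = 1
    have : gc leafST = 1 := by
      show ((-1 : ℚ)) ^ (inodesT (PTree.node [])) = 1
      norm_num [show inodesT (PTree.node []) = 0 from rfl]
    rw [this]
    norm_num
  | node us h2 hall =>
    set n := us.length with hn
    have hn2 : 2 ≤ n := h2
    have hbred : Reduced (PTree.node (List.replicate n (PTree.node []))) := by
      apply Reduced.node
      · simpa using hn2
      · intro s hs
        rw [List.eq_of_mem_replicate hs]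
        exact Reduced.leaf
    set tS : SchT := ⟨PTree.node us, Reduced.node us h2 hall⟩ with htS
    set a : SchT × List SchT := (leafST, [tS]) with ha
    set b : SchT × List SchT :=
      (⟨PTree.node (List.replicate n (PTree.node [])), hbred⟩,
        List.pmap Subtype.mk us hall) with hb
    have hab : a ≠ b := by
      intro h
      have := congrArg (fun p => p.1.val) h
      simp [ha, hb, leafST] at this
      omega
    have key : ∀ p ∈ Function.support (fun p : SchT × List SchT =>
        fc p.1 * (p.2.map gc).prod),
        p ∈ Decomps tS ↔ p ∈ ({a, b} : Set (SchT × List SchT)) := by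
      intro p hp
      obtain ⟨p1, p2⟩ := p
      have hcor := hsupp _ hp
      constructor
      · intro hd
        rcases corolla_cases p1 hcor with rfl | ⟨m, hm2, hp1⟩
        · have h2' := (decomps_leaf _ p2).mp hd
          left
          simp [ha, h2']
        · obtain ⟨hlen, heq⟩ :=
            (decomps_corolla m (by omega) p1 hp1 _ p2).mp hd
          right
          have heq' : PTree.node us = PTree.node (p2.map Subtype.val) := heq
          injection heq' with hmap'
          have hmap : List.map Subtype.val p2 = us := hmap'.symm
          have hlm : us.length = p2.length := by rw [← hmap]; exact List.length_map ..
          have hm : m = n := by omega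
          have hp2 : p2 = List.pmap Subtype.mk us hall := by
            apply List.map_injective_iff.mpr Subtype.val_injective
            rw [hmap, map_val_pmap]
          simp [hb, hp2]
          exact congrArg (·, List.pmap Subtype.mk us hall) (Subtype.ext (a1 := p1) (a2 := ⟨_, hbred⟩) (by rw [hp1, hm]))
      · intro hmem
        rcases hmem with hmem | hmem
        · simp [ha] at hmem
          obtain ⟨rfl, rfl⟩ := Prod.mk.injEq .. ▸ hmem
          exact (decomps_leaf _ _).mpr rfl
        · simp [hb] at hmem
          obtain ⟨rfl, rfl⟩ := Prod.mk.injEq .. ▸ hmem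
          refine (decomps_corolla n (by omega) _ rfl _ _).mpr ?_
          constructor
          · simp [hn]; exact List.length_pmap
          · show tS.val = PTree.node ((List.pmap Subtype.mk us hall).map Subtype.val)
            rw [map_val_pmap]
    rw [finsum_mem_inter_support_eq' _ _ _ key, finsum_mem_pair hab]
    have hfcb : fc (⟨PTree.node (List.replicate n (PTree.node [])), hbred⟩ : SchT) = 1 :=
      fc_corolla _ n rfl
    have hF_a : fc a.1 * (a.2.map gc).prod = (-1 : ℚ) ^ (inodesT (PTree.node us)) := by
      show fc leafST * (gc tS * 1) = _
      rw [fc_leaf, one_mul, mul_one]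
      rfl
    have hF_b : fc b.1 * (b.2.map gc).prod = (-1 : ℚ) ^ (inodesL us) := by
      show fc (⟨PTree.node (List.replicate n (PTree.node [])), hbred⟩ : SchT) *
        ((List.pmap Subtype.mk us hall).map gc).prod = _
      rw [hfcb, one_mul, prod_gc_pmap]
    rw [hF_a, hF_b]
    have heG : eG tS = 0 := by
      obtain ⟨u, us', rfl⟩ : ∃ u us', us = u :: us' := by
        cases us with
        | nil => simp [hn] at hn2
        | cons u us' => exact ⟨u, us', rfl⟩
      rfl
    rw [heG]
    obtain ⟨u, us', rfl⟩ : ∃ u us', us = u :: us' := by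
      cases us with
      | nil => simp [hn] at hn2
      | cons u us' => exact ⟨u, us', rfl⟩
    rw [inodesT_node, pow_add]
    ring
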